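/- An additively separable hedonic game (V,w) admits a Nash stable partition if and only if it admits a Nash stable partition in which every part induces a connected subgraph of the square of the underlying graph, where the square is the simple graph on V in which distinct u, v are adjacent iff in the underlying graph they are adjacent or have a common neighbor. -/

import Mathlib

/-- A partition of the finite vertex set `V`, represented by the function sending each
vertex to its part. -/
structure ASHGPart (V : Type*) [DecidableEq V] where
  part : V → Finset V
  mem_part : ∀ v, v ∈ part v
  eq_of_mem : ∀ u v, u ∈ part v → part u = part v

/-- The utility of vertex `v` in coalition `S`: the sum of `w v u` over `u ∈ S`, `u ≠ v`. -/
def util {V : Type*} [DecidableEq V] (w : V → V → ℤ) (v : V) (S : Finset V) : ℤ :=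
  ∑ u ∈ S.erase v, w v u

/-- A partition is Nash stable if every vertex has nonnegative utility in its own part and
does not prefer any other part of the partition. -/
def NashStable {V : Type*} [DecidableEq V] (w : V → V → ℤ) (π : ASHGPart V) : Prop :=
  ∀ v : V, 0 ≤ util w v (π.part v) ∧ ∀ x : V, util w v (π.part x) ≤ util w v (π.part v)


/-- The underlying (undirected simple) graph of the game: distinct `u, v` are adjacent
iff `w u v ≠ 0` or `w v u ≠ 0`. -/
def underlying {V : Type*} (w : V → V → ℤ) : SimpleGraph V where
  Adj u v := u ≠ v ∧ (w u v ≠ 0 ∨ w v u ≠ 0)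
  symm := ⟨fun u v h => ⟨h.1.symm, h.2.symm⟩⟩
  loopless := ⟨fun v h => h.1 rfl⟩

/-- The square of the underlying graph: distinct `u, v` are adjacent iff in the underlying
graph they are adjacent or have a common neighbor. -/
def squareGraph {V : Type*} (w : V → V → ℤ) : SimpleGraph V where
  Adj u v := u ≠ v ∧
    ((underlying w).Adj u v ∨ ∃ z, (underlying w).Adj u z ∧ (underlying w).Adj z v)
  symm := ⟨fun u v h => ⟨h.1.symm, h.2.imp (fun h' => h'.symm)
    (fun ⟨z, h1, h2⟩ => ⟨z, h2.symm, h1.symm⟩)⟩⟩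
  loopless := ⟨fun v h => h.1 rfl⟩

theorem stmt_4 {V : Type*} [Fintype V] [DecidableEq V] (w : V → V → ℤ)
    (hw : ∀ v, w v v = 0) :
    (∃ π : ASHGPart V, NashStable w π) ↔
    (∃ π : ASHGPart V, NashStable w π ∧
      ∀ v : V, ((squareGraph w).induce (↑(π.part v) : Set V)).Connected) := by
  constructor
  swap
  · rintro ⟨π, hπ, -⟩; exact ⟨π, hπ⟩
  rintro ⟨π, hπ⟩
  classical
  set R : V → V → Prop := fun a b => (squareGraph w).Adj a b ∧ π.part a = π.part b with hR
  have hRsymm : ∀ a b, R a b → R b a := fun a b h => ⟨h.1.symm, h.2.symm⟩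
  have hRTsymm : ∀ a b, Relation.ReflTransGen R a b → Relation.ReflTransGen R b a := by
    intro a b h
    induction h with
    | refl => exact .refl
    | tail _ hbc ih => exact (Relation.ReflTransGen.single (hRsymm _ _ hbc)).trans ih
  set P : V → Finset V := fun v => Finset.univ.filter (Relation.ReflTransGen R v) with hPdef
  have memP : ∀ v u, u ∈ P v ↔ Relation.ReflTransGen R v u := by
    intro v u; simp [hPdef]
  have hPsub : ∀ v u, u ∈ P v → π.part u = π.part v := by
    intro v u h
    rw [memP] at h
    induction h with
    | refl => rfl
    | tail _ hbc ih => exact hbc.2.symm.trans ih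
  have hPmem : ∀ v u, u ∈ P v → u ∈ π.part v := by
    intro v u h
    have h2 := hPsub v u h
    rw [← h2]; exact π.mem_part u
  refine ⟨⟨P, fun v => (memP v v).2 .refl, fun u v h => ?_⟩, ?_, ?_⟩
  · ext x
    simp only [memP]
    constructor
    · intro hx; exact ((memP v u).1 h).trans hx
    · intro hx; exact (hRTsymm _ _ ((memP v u).1 h)).trans hx
  · -- Nash stability
    have subErase : ∀ v x, (P x).erase v ⊆ (π.part x).erase v :=
      fun v x => Finset.erase_subset_erase _ (fun u hu => hPmem x u hu)
    have utilA : ∀ v, util w v (P v) = util w v (π.part v) := by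
      intro v
      apply Finset.sum_subset (subErase v v)
      intro u hu hnu
      by_contra hwu
      apply hnu
      rw [Finset.mem_erase] at hu ⊢
      refine ⟨hu.1, (memP v u).2 (Relation.ReflTransGen.single
        ⟨⟨fun h => hu.1 h.symm, Or.inl ⟨fun h => hu.1 h.symm, Or.inl hwu⟩⟩,
          (π.eq_of_mem u v hu.2).symm⟩)⟩
    intro v
    constructor
    · show (0:ℤ) ≤ util w v (P v)
      rw [utilA]; exact (hπ v).1
    · intro x
      show util w v (P x) ≤ util w v (P v)
      by_cases hvx : v ∈ P x
      · have : P v = P x := by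
          ext y
          simp only [memP]
          constructor
          · intro hy; exact ((memP x v).1 hvx).trans hy
          · intro hy; exact (hRTsymm _ _ ((memP x v).1 hvx)).trans hy
        rw [this]
      · by_cases hex : ∃ u ∈ (P x).erase v, w v u ≠ 0
        · obtain ⟨u, hu, hwu⟩ := hex
          have heq : util w v (P x) = util w v (π.part x) := by
            apply Finset.sum_subset (subErase v x)
            intro u' hu' hnu'
            by_contra hwu'
            apply hnu'
            rw [Finset.mem_erase] at hu' ⊢
            refine ⟨hu'.1, ?_⟩
            have huP : u ∈ P x := (Finset.mem_erase.1 hu).2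
            have huv : u ≠ v := (Finset.mem_erase.1 hu).1
            have huu' : u ≠ u' := by
              rintro rfl
              exact hnu' (Finset.mem_erase.2 ⟨hu'.1, huP⟩)
            have hadj : (squareGraph w).Adj u u' :=
              ⟨huu', Or.inr ⟨v, ⟨huv, Or.inr hwu⟩, ⟨fun h => hu'.1 h.symm, Or.inl hwu'⟩⟩⟩
            have hparts : π.part u = π.part u' := by
              rw [π.eq_of_mem u x (hPmem x u huP), π.eq_of_mem u' x hu'.2]
            exact (memP x u').2 (((memP x u).1 huP).tail ⟨hadj, hparts⟩)
          rw [heq, utilA]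
          exact (hπ v).2 x
        · push_neg at hex
          have hzero : util w v (P x) = 0 := Finset.sum_eq_zero hex
          rw [hzero, utilA]
          exact (hπ v).1
  · -- connectivity
    intro v
    show ((squareGraph w).induce (↑(P v) : Set V)).Connected
    have hv : v ∈ (↑(P v) : Set V) := Finset.mem_coe.2 ((memP v v).2 .refl)
    have key : ∀ a, Relation.ReflTransGen R v a → ∀ ha : a ∈ (↑(P v) : Set V),
        ((squareGraph w).induce (↑(P v) : Set V)).Reachable ⟨v, hv⟩ ⟨a, ha⟩ := by
      intro a h
      induction h with
      | refl => intro _; exact SimpleGraph.Reachable.refl _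
      | @tail b c hb hbc ih =>
        intro hc
        have hbm : b ∈ (↑(P v) : Set V) := Finset.mem_coe.2 ((memP v b).2 hb)
        exact (ih hbm).trans (SimpleGraph.Adj.reachable (by exact hbc.1 :
          ((squareGraph w).induce (↑(P v) : Set V)).Adj ⟨b, hbm⟩ ⟨c, hc⟩))
    haveI : Nonempty (↑(P v) : Set V) := ⟨⟨v, hv⟩⟩
    refine ⟨fun a b => ?_⟩
    obtain ⟨a, ha⟩ := a
    obtain ⟨b, hb⟩ := b
    exact (key a ((memP v a).1 (Finset.mem_coe.1 ha)) ha).symm.trans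
      (key b ((memP v b).1 (Finset.mem_coe.1 hb)) hb)
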